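/- In the setting of geodesics γ_ε of curvature λ leaving orthogonally from a horizontal curve Γ, at the cut value s_ε (where the vertical component of the Jacobi field X_ε vanishes) one has X_ε(s_ε) = i·γ_ε'(s_ε); i.e., X_ε(s_ε) is the unit horizontal vector J applied to the geodesic's velocity. -/

import Mathlib

open Real
open scoped RealInnerProductSpace

def qi : Quaternion ℝ := ⟨0, 1, 0, 0⟩

lemma qi_mul_qi : qi * qi = -1 := by
  ext <;> simp only [Quaternion.re_mul, Quaternion.imI_mul, Quaternion.imJ_mul, Quaternion.imK_mul] <;>
    simp [qi, Quaternion.re_one, Quaternion.imI_one, Quaternion.imJ_one, Quaternion.imK_one]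

lemma inner_qi_left (x y : Quaternion ℝ) : ⟪qi*x, y⟫ = -⟪x, qi*y⟫ := by
  simp only [Quaternion.inner_def, Quaternion.re_mul, Quaternion.imI_mul,
    Quaternion.imJ_mul, Quaternion.imK_mul, Quaternion.re_star, Quaternion.imI_star,
    Quaternion.imJ_star, Quaternion.imK_star]
  simp only [qi]
  ring

lemma inner_qi_qi (x y : Quaternion ℝ) : ⟪qi*x, qi*y⟫ = ⟪x,y⟫ := by
  simp only [Quaternion.inner_def, Quaternion.re_mul, Quaternion.imI_mul,
    Quaternion.imJ_mul, Quaternion.imK_mul, Quaternion.re_star, Quaternion.imI_star,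
    Quaternion.imJ_star, Quaternion.imK_star]
  simp only [qi]
  ring

lemma inner_qi_self (x : Quaternion ℝ) : ⟪qi*x, x⟫ = 0 := by
  simp only [Quaternion.inner_def, Quaternion.re_mul, Quaternion.imI_mul,
    Quaternion.imJ_mul, Quaternion.imK_mul, Quaternion.re_star, Quaternion.imI_star,
    Quaternion.imJ_star, Quaternion.imK_star]
  simp only [qi]
  ring

lemma frame_decomp (a b : Quaternion ℝ) (ha : ‖a‖ = 1) (hb : ‖b‖ = 1)
    (hba : ⟪b, a⟫ = 0) (hbia : ⟪b, qi*a⟫ = 0) (w : Quaternion ℝ) :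
    w = ⟪w,a⟫ • a + ⟪w,qi*a⟫ • (qi*a) + ⟪w,b⟫ • b + ⟪w,qi*b⟫ • (qi*b) := by
  have h1 : ⟪a,a⟫ = 1 := by rw [real_inner_self_eq_norm_sq, ha]; norm_num
  have h2 : ⟪b,b⟫ = 1 := by rw [real_inner_self_eq_norm_sq, hb]; norm_num
  have hab : ⟪a,b⟫ = 0 := by rw [real_inner_comm]; exact hba
  have haib : ⟪a, qi*b⟫ = 0 := by
    have := inner_qi_left a b
    rw [real_inner_comm] at hbia
    linarith [inner_qi_left a b, hbia]
  have hqq : ∀ x : Quaternion ℝ, qi*(qi*x) = -x := fun x => by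
    rw [← mul_assoc, qi_mul_qi]; simp
  have hsq : ∀ x : Quaternion ℝ, ⟪x, qi*x⟫ = 0 := fun x => by
    rw [real_inner_comm]; exact inner_qi_self x
  set e : Fin 4 → Quaternion ℝ := ![a, qi*a, b, qi*b] with he
  have hqn : ‖qi‖ = 1 := by
    rw [norm_eq_sqrt_real_inner, Quaternion.inner_def]
    simp only [Quaternion.re_mul, Quaternion.re_star, Quaternion.imI_star, Quaternion.imJ_star,
      Quaternion.imK_star]
    simp [qi]
  have hO : Orthonormal ℝ e := by
    rw [orthonormal_iff_ite]
    intro i j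
    fin_cases i <;> fin_cases j <;>
      simp [he, h1, h2, hab, hba, hbia, haib, inner_qi_self, inner_qi_qi, inner_qi_left,
        real_inner_comm b (qi*a), real_inner_comm a (qi*a), real_inner_comm b (qi*b),
        real_inner_comm a b, real_inner_comm a (qi*b), hqq, hsq, inner_neg_right, inner_neg_left, ha, hb, hqn]
  have hcard : Fintype.card (Fin 4) = Module.finrank ℝ (Quaternion ℝ) := by
    simp [Quaternion.finrank_eq_four]
  let bas := basisOfLinearIndependentOfCardEqFinrank hO.linearIndependent hcard
  have hbas : ⇑bas = e := coe_basisOfLinearIndependentOfCardEqFinrank _ _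
  let onb := bas.toOrthonormalBasis (by rwa [hbas])
  have honb : ⇑onb = e := by
    rw [Module.Basis.coe_toOrthonormalBasis, hbas]
  have := onb.sum_repr' w
  rw [Fin.sum_univ_four] at this
  simp only [honb] at this
  have e0 : e 0 = a := rfl
  have e1 : e 1 = qi*a := rfl
  have e2 : e 2 = b := rfl
  have e3 : e 3 = qi*b := rfl
  rw [e0, e1, e2, e3] at this
  rw [real_inner_comm w a, real_inner_comm w (qi*a), real_inner_comm w b,
    real_inner_comm w (qi*b)] at this
  exact this.symm

lemma ode_unique (lam : ℝ) (y y' y'' : ℝ → Quaternion ℝ)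
    (hd1 : ∀ s, HasDerivAt y (y' s) s) (hd2 : ∀ s, HasDerivAt y' (y'' s) s)
    (hode : ∀ s, y'' s + y s + (2*lam) • (qi * y' s) = 0)
    (h0 : y 0 = 0) (h0' : y' 0 = 0) : ∀ s, y s = 0 ∧ y' s = 0 := by
  set E : ℝ → ℝ := fun s => ⟪y s, y s⟫ + ⟪y' s, y' s⟫ with hEdef
  have hE : ∀ s, HasDerivAt E 0 s := by
    intro s
    have h := ((hd1 s).inner ℝ (hd1 s)).add ((hd2 s).inner ℝ (hd2 s))
    have hy'' : y'' s = -(y s) - (2*lam) • (qi * y' s) := by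
      have := hode s; linear_combination (norm := module) this
    rw [hy''] at h
    refine h.congr_deriv (Eq.symm ?_)
    rw [inner_sub_left, inner_sub_right, inner_neg_left, inner_neg_right,
      real_inner_smul_left, real_inner_smul_right, inner_qi_self]
    have h2 : ⟪y' s, qi * y' s⟫ = 0 := by rw [real_inner_comm]; exact inner_qi_self _
    rw [h2]
    ring_nf
  have hconst : ∀ s, E s = E 0 := by
    intro s
    exact is_const_of_deriv_eq_zero (fun x => (hE x).differentiableAt)
      (fun x => (hE x).deriv) s 0
  have hE0 : E 0 = 0 := by simp [hEdef, h0, h0']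
  intro s
  have hEs : E s = 0 := (hconst s).trans hE0
  have h1 : (0:ℝ) ≤ ⟪y s, y s⟫ := real_inner_self_nonneg
  have h2 : (0:ℝ) ≤ ⟪y' s, y' s⟫ := real_inner_self_nonneg
  have hy : ⟪y s, y s⟫ = 0 := by simp only [hEdef] at hEs; linarith
  have hy' : ⟪y' s, y' s⟫ = 0 := by simp only [hEdef] at hEs; linarith
  exact ⟨inner_self_eq_zero.mp hy, inner_self_eq_zero.mp hy'⟩

noncomputable def Fc (lam ω s : ℝ) : ℂ :=
  Complex.exp (-(lam*s)*Complex.I) * (Real.cos (ω*s) + (lam/ω) * Real.sin (ω*s) * Complex.I)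
noncomputable def Gc (lam ω s : ℝ) : ℂ :=
  Complex.exp (-(lam*s)*Complex.I) * (Real.sin (ω*s)/ω)
noncomputable def Hc (lam ω s : ℝ) : ℂ :=
  Complex.exp (-(lam*s)*Complex.I) * (Real.cos (ω*s) - (lam/ω) * Real.sin (ω*s) * Complex.I)

lemma hasDerivAt_exp_part (lam : ℝ) (s : ℝ) :
    HasDerivAt (fun t : ℝ => Complex.exp (-(lam*t)*Complex.I))
      (Complex.exp (-(lam*s)*Complex.I) * (-(lam:ℂ)*Complex.I)) s := by
  have h1 : HasDerivAt (fun t : ℝ => -(lam*t)) (-lam) s := by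
    exact ((hasDerivAt_id s).const_mul lam).neg.congr_deriv (by ring)
  have h2 : HasDerivAt (fun t : ℝ => ((-(lam*t) : ℝ) : ℂ)) ((-lam : ℝ) : ℂ) s :=
    h1.ofReal_comp
  have h3 := (h2.mul_const Complex.I).cexp
  convert h3 using 2 <;> push_cast <;> ring

lemma hasDerivAt_cos_part (ω : ℝ) (s : ℝ) :
    HasDerivAt (fun t : ℝ => ((Real.cos (ω*t) : ℝ) : ℂ)) ((-ω * Real.sin (ω*s) : ℝ) : ℂ) s := by
  have h1 : HasDerivAt (fun t : ℝ => ω*t) ω s := by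
    simpa using (hasDerivAt_id s).const_mul ω
  have := (Real.hasDerivAt_cos (ω*s)).comp s h1
  have h2 : HasDerivAt (fun t : ℝ => Real.cos (ω*t)) (-ω * Real.sin (ω*s)) s := by
    exact this.congr_deriv (by ring)
  exact h2.ofReal_comp

lemma hasDerivAt_sin_part (ω : ℝ) (s : ℝ) :
    HasDerivAt (fun t : ℝ => ((Real.sin (ω*t) : ℝ) : ℂ)) ((ω * Real.cos (ω*s) : ℝ) : ℂ) s := by
  have h1 : HasDerivAt (fun t : ℝ => ω*t) ω s := by
    simpa using (hasDerivAt_id s).const_mul ω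
  have := (Real.hasDerivAt_sin (ω*s)).comp s h1
  have h2 : HasDerivAt (fun t : ℝ => Real.sin (ω*t)) (ω * Real.cos (ω*s)) s := by
    exact this.congr_deriv (by ring)
  exact h2.ofReal_comp

lemma hasDerivAt_Gc (lam ω : ℝ) (hω : ω ≠ 0) (s : ℝ) :
    HasDerivAt (Gc lam ω) (Hc lam ω s) s := by
  have h := (hasDerivAt_exp_part lam s).mul ((hasDerivAt_sin_part ω s).div_const (ω:ℂ))
  have hfun : Gc lam ω = fun t : ℝ =>
      Complex.exp (-(lam*t)*Complex.I) * (((Real.sin (ω*t) : ℝ) : ℂ)/(ω:ℂ)) := by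
    funext t; simp [Gc]
  rw [hfun]
  refine h.congr_deriv (Eq.symm ?_)
  have hω' : (ω:ℂ) ≠ 0 := by exact_mod_cast hω
  simp only [Hc]
  field_simp
  push_cast
  ring

lemma hasDerivAt_Fc (lam ω : ℝ) (hω : ω ≠ 0) (hω2 : ω^2 = 1 + lam^2) (s : ℝ) :
    HasDerivAt (Fc lam ω) (-(Gc lam ω s)) s := by
  have h := (hasDerivAt_exp_part lam s).mul
    (((hasDerivAt_cos_part ω s).add
      (((hasDerivAt_sin_part ω s).const_mul ((lam/ω : ℝ) : ℂ)).mul_const Complex.I)))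
  have hfun : Fc lam ω = fun t : ℝ =>
      Complex.exp (-(lam*t)*Complex.I) *
        (((Real.cos (ω*t) : ℝ) : ℂ) + ((lam/ω : ℝ) : ℂ) * ((Real.sin (ω*t) : ℝ) : ℂ) * Complex.I) := by
    funext t; simp [Fc]
  rw [hfun]
  refine h.congr_deriv (Eq.symm ?_)
  have hω' : (ω:ℂ) ≠ 0 := by exact_mod_cast hω
  have hω2c : (ω:ℂ)^2 = 1 + (lam:ℂ)^2 := by exact_mod_cast hω2
  have hinv : (ω:ℂ) * ((ω:ℂ))⁻¹ = 1 := mul_inv_cancel₀ hω'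
  simp only [Gc, Complex.ofReal_mul, Complex.ofReal_neg, Complex.ofReal_div, Pi.add_apply]
  linear_combination (Complex.exp (-((lam:ℂ)*(s:ℂ))*Complex.I) * ((Real.sin (ω*s) : ℝ) : ℂ) / (ω:ℂ)) * hω2c
    + (Complex.exp (-((lam:ℂ)*(s:ℂ))*Complex.I) * (lam:ℂ)^2 * ((Real.sin (ω*s) : ℝ) : ℂ) / (ω:ℂ)) * Complex.I_mul_I
    - (Complex.exp (-((lam:ℂ)*(s:ℂ))*Complex.I) * ((Real.sin (ω*s) : ℝ) : ℂ) * (ω:ℂ)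
       + Complex.exp (-((lam:ℂ)*(s:ℂ))*Complex.I) * (lam:ℂ) * Complex.I * ((Real.cos (ω*s) : ℝ) : ℂ)) * hinv

lemma hasDerivAt_Hc (lam ω : ℝ) (hω : ω ≠ 0) (hω2 : ω^2 = 1 + lam^2) (s : ℝ) :
    HasDerivAt (Hc lam ω) (-(Gc lam ω s) - 2*lam*Complex.I*(Hc lam ω s)) s := by
  have h := (hasDerivAt_exp_part lam s).mul
    (((hasDerivAt_cos_part ω s).sub
      (((hasDerivAt_sin_part ω s).const_mul ((lam/ω : ℝ) : ℂ)).mul_const Complex.I)))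
  have hfun : Hc lam ω = fun t : ℝ =>
      Complex.exp (-(lam*t)*Complex.I) *
        (((Real.cos (ω*t) : ℝ) : ℂ) - ((lam/ω : ℝ) : ℂ) * ((Real.sin (ω*t) : ℝ) : ℂ) * Complex.I) := by
    funext t; simp [Hc]
  rw [hfun]
  refine h.congr_deriv (Eq.symm ?_)
  have hω' : (ω:ℂ) ≠ 0 := by exact_mod_cast hω
  have hω2c : (ω:ℂ)^2 = 1 + (lam:ℂ)^2 := by exact_mod_cast hω2
  have hinv : (ω:ℂ) * ((ω:ℂ))⁻¹ = 1 := mul_inv_cancel₀ hω'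
  simp only [Gc, Hc, Complex.ofReal_mul, Complex.ofReal_neg, Complex.ofReal_div, Pi.sub_apply]
  linear_combination (Complex.exp (-((lam:ℂ)*(s:ℂ))*Complex.I) * ((Real.sin (ω*s) : ℝ) : ℂ) / (ω:ℂ)) * hω2c
    + (Complex.exp (-((lam:ℂ)*(s:ℂ))*Complex.I) * (lam:ℂ)^2 * ((Real.sin (ω*s) : ℝ) : ℂ) / (ω:ℂ)) * Complex.I_mul_I
    - (Complex.exp (-((lam:ℂ)*(s:ℂ))*Complex.I) * ((Real.sin (ω*s) : ℝ) : ℂ) * (ω:ℂ)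
       - Complex.exp (-((lam:ℂ)*(s:ℂ))*Complex.I) * (lam:ℂ) * Complex.I * ((Real.cos (ω*s) : ℝ) : ℂ)) * hinv

noncomputable def ι : ℂ →ₐ[ℝ] Quaternion ℝ := Complex.liftAux qi qi_mul_qi

lemma iota_apply (z : ℂ) : ι z = algebraMap ℝ (Quaternion ℝ) z.re + z.im • qi := rfl

lemma iota_mul_eq (z : ℂ) (u : Quaternion ℝ) :
    ι z * u = z.re • u + z.im • (qi * u) := by
  rw [iota_apply, add_mul, smul_mul_assoc, ← Algebra.smul_def]

lemma qi_mul_iota (z : ℂ) (u : Quaternion ℝ) :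
    qi * (ι z * u) = ι (Complex.I * z) * u := by
  rw [map_mul, ← mul_assoc]
  congr 1
  congr 1
  exact (Complex.liftAux_apply_I qi qi_mul_qi).symm

lemma iota_hasDerivAt {f : ℝ → ℂ} {f' : ℂ} {s : ℝ} (hf : HasDerivAt f f' s) :
    HasDerivAt (fun t => ι (f t)) (ι f') s := by
  exact ((ι.toLinearMap : ℂ →ₗ[ℝ] Quaternion ℝ).toContinuousLinearMap.hasFDerivAt.comp_hasDerivAt
    s hf : HasDerivAt (fun t => ι (f t)) _ s)

lemma inner_iota (z w : ℂ) (u v : Quaternion ℝ) :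
    ⟪ι z * u, ι w * v⟫ =
      (z * (starRingEnd ℂ) w).re * ⟪u,v⟫ + (z * (starRingEnd ℂ) w).im * ⟪qi*u, v⟫ := by
  rw [iota_mul_eq, iota_mul_eq]
  simp only [inner_add_left, inner_add_right, real_inner_smul_left, real_inner_smul_right]
  have h1 : ⟪u, qi*v⟫ = -⟪qi*u, v⟫ := by rw [inner_qi_left]; ring
  have h2 : ⟪qi*u, qi*v⟫ = ⟪u, v⟫ := inner_qi_qi u v
  rw [h1, h2]
  simp [Complex.mul_re, Complex.mul_im]
  ring

lemma iota_I : ι Complex.I = qi := Complex.liftAux_apply_I qi qi_mul_qi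

lemma iota_mul_qi (z : ℂ) (u : Quaternion ℝ) : ι z * (qi * u) = ι (z*Complex.I) * u := by
  rw [map_mul, iota_I, mul_assoc]

lemma iota_real_mul (r : ℝ) (z : ℂ) (u : Quaternion ℝ) :
    ι ((r:ℂ)*z) * u = r • (ι z * u) := by
  rw [map_mul, show ((r:ℂ)) = algebraMap ℝ ℂ r from rfl, AlgHom.commutes,
    ← Algebra.smul_def, smul_mul_assoc]

lemma hc_ode (lam ω : ℝ) (hω : ω ≠ 0) (s : ℝ) :
    Fc lam ω s - Hc lam ω s - 2*lam*Complex.I*(Gc lam ω s) = 0 := by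
  simp only [Fc, Gc, Hc, Complex.ofReal_div]
  ring

lemma Fc_zero (lam ω : ℝ) : Fc lam ω 0 = 1 := by
  simp [Fc]
lemma Gc_zero (lam ω : ℝ) : Gc lam ω 0 = 0 := by
  simp [Gc]
lemma Hc_zero (lam ω : ℝ) : Hc lam ω 0 = 1 := by
  simp [Hc]

lemma qi_qi (x : Quaternion ℝ) : qi * (qi * x) = -x := by
  rw [← mul_assoc, qi_mul_qi]; simp

lemma sol_explicit (lam ω : ℝ) (hω : ω ≠ 0) (hω2 : ω^2 = 1+lam^2)
    (g gs gss : ℝ → Quaternion ℝ) (a b : Quaternion ℝ)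
    (h0 : g 0 = a) (h0' : gs 0 = qi * b)
    (hd1 : ∀ s, HasDerivAt g (gs s) s) (hd2 : ∀ s, HasDerivAt gs (gss s) s)
    (hgeo : ∀ s, gss s + g s + (2*lam) • (qi * gs s) = 0) :
    ∀ s, g s = ι (Fc lam ω s) * a + ι (Gc lam ω s) * (qi * b) ∧
      gs s = ι (-(Gc lam ω s)) * a + ι (Hc lam ω s) * (qi * b) := by
  set P : ℝ → Quaternion ℝ := fun t => ι (Fc lam ω t) * a + ι (Gc lam ω t) * (qi * b) with hP
  set V : ℝ → Quaternion ℝ := fun t => ι (-(Gc lam ω t)) * a + ι (Hc lam ω t) * (qi * b) with hV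
  set A : ℝ → Quaternion ℝ := fun t => ι (-(Hc lam ω t)) * a
    + ι (-(Gc lam ω t) - 2*lam*Complex.I*(Hc lam ω t)) * (qi * b) with hA
  have hPd : ∀ t, HasDerivAt P (V t) t := fun t =>
    ((iota_hasDerivAt (hasDerivAt_Fc lam ω hω hω2 t)).mul_const _).add
      ((iota_hasDerivAt (hasDerivAt_Gc lam ω hω t)).mul_const _)
  have hVd : ∀ t, HasDerivAt V (A t) t := fun t =>
    ((iota_hasDerivAt ((hasDerivAt_Gc lam ω hω t).neg)).mul_const _).add
      ((iota_hasDerivAt (hasDerivAt_Hc lam ω hω hω2 t)).mul_const _)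
  have hodeP : ∀ t, A t + P t + (2*lam) • (qi * V t) = 0 := by
    intro t
    have h1 : qi * V t = ι (Complex.I * -(Gc lam ω t)) * a
        + ι (Complex.I * Hc lam ω t) * (qi * b) := by
      rw [hV]; rw [mul_add, qi_mul_iota, qi_mul_iota]
    have h2 : (2*lam) • (qi * V t)
        = ι (((2*lam : ℝ):ℂ) * (Complex.I * -(Gc lam ω t))) * a
          + ι (((2*lam : ℝ):ℂ) * (Complex.I * Hc lam ω t)) * (qi * b) := by
      rw [h1, smul_add, iota_real_mul, iota_real_mul]
    rw [h2, hA, hP]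
    have key1 : (-(Hc lam ω t)) + (Fc lam ω t)
        + ((2*lam : ℝ):ℂ) * (Complex.I * -(Gc lam ω t)) = 0 := by
      have hco := hc_ode lam ω hω t
      push_cast
      linear_combination hco
    have key2 : (-(Gc lam ω t) - 2*lam*Complex.I*(Hc lam ω t)) + (Gc lam ω t)
        + ((2*lam : ℝ):ℂ) * (Complex.I * Hc lam ω t) = 0 := by push_cast; ring
    have hz1 : ι (-(Hc lam ω t)) * a + ι (Fc lam ω t) * a
        + ι (((2*lam : ℝ):ℂ) * (Complex.I * -(Gc lam ω t))) * a = 0 := by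
      rw [← add_mul, ← add_mul, ← map_add, ← map_add, key1, map_zero, zero_mul]
    have hz2 : ι (-(Gc lam ω t) - 2*lam*Complex.I*(Hc lam ω t)) * (qi * b)
        + ι (Gc lam ω t) * (qi * b)
        + ι (((2*lam : ℝ):ℂ) * (Complex.I * Hc lam ω t)) * (qi * b) = 0 := by
      rw [← add_mul, ← add_mul, ← map_add, ← map_add, key2, map_zero, zero_mul]
    linear_combination (norm := module) hz1 + hz2
  have huniq := ode_unique lam (fun t => g t - P t) (fun t => gs t - V t) (fun t => gss t - A t)
    (fun t => (hd1 t).sub (hPd t)) (fun t => (hd2 t).sub (hVd t))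
    (by
      intro t
      have hg := hgeo t
      have hp := hodeP t
      rw [mul_sub, smul_sub]
      linear_combination (norm := module) hg - hp)
    (by
      show g 0 - P 0 = 0
      rw [h0, hP]
      simp [Fc_zero, Gc_zero])
    (by
      show gs 0 - V 0 = 0
      rw [h0', hV]
      simp [Gc_zero, Hc_zero])
  intro s
  obtain ⟨u1, u2⟩ := huniq s
  exact ⟨sub_eq_zero.mp u1, sub_eq_zero.mp u2⟩

lemma conj_exp_part (lam s : ℝ) :
    (starRingEnd ℂ) (Complex.exp (-(lam*s)*Complex.I)) = Complex.exp ((lam*s)*Complex.I) := by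
  rw [← Complex.exp_conj]
  congr 1
  simp

lemma ee_one (lam s : ℝ) :
    Complex.exp (-(lam*s)*Complex.I) * Complex.exp ((lam*s)*Complex.I) = 1 := by
  rw [← Complex.exp_add]
  ring_nf
  exact Complex.exp_zero

lemma FcG (lam ω s : ℝ) :
    Fc lam ω s * (starRingEnd ℂ) (Gc lam ω s)
      = (((Real.cos (ω*s) : ℝ) : ℂ) + ((lam/ω : ℝ) : ℂ) * ((Real.sin (ω*s) : ℝ) : ℂ) * Complex.I)
        * (((Real.sin (ω*s) : ℝ) : ℂ) / ((ω:ℝ) : ℂ)) := by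
  simp only [Fc, Gc, map_mul, map_div₀, map_add, Complex.conj_ofReal, Complex.conj_I,
    conj_exp_part, Complex.ofReal_div]
  linear_combination ((((Real.cos (ω*s) : ℝ) : ℂ) + ((lam:ℂ)/(ω:ℂ)) * ((Real.sin (ω*s) : ℝ) : ℂ) * Complex.I)
    * (((Real.sin (ω*s) : ℝ) : ℂ) / ((ω:ℝ) : ℂ))) * ee_one lam s

lemma GcF (lam ω s : ℝ) :
    Gc lam ω s * (starRingEnd ℂ) (Fc lam ω s)
      = (((Real.sin (ω*s) : ℝ) : ℂ) / ((ω:ℝ) : ℂ))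
        * (((Real.cos (ω*s) : ℝ) : ℂ) - ((lam/ω : ℝ) : ℂ) * ((Real.sin (ω*s) : ℝ) : ℂ) * Complex.I) := by
  simp only [Fc, Gc, map_mul, map_div₀, map_add, Complex.conj_ofReal, Complex.conj_I,
    conj_exp_part, Complex.ofReal_div]
  linear_combination ((((Real.sin (ω*s) : ℝ) : ℂ) / ((ω:ℝ) : ℂ))
    * (((Real.cos (ω*s) : ℝ) : ℂ) - ((lam:ℂ)/(ω:ℂ)) * ((Real.sin (ω*s) : ℝ) : ℂ) * Complex.I)) * ee_one lam s

lemma GcG (lam ω s : ℝ) :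
    Gc lam ω s * (starRingEnd ℂ) (Gc lam ω s)
      = (((Real.sin (ω*s) : ℝ) : ℂ) / ((ω:ℝ) : ℂ)) * (((Real.sin (ω*s) : ℝ) : ℂ) / ((ω:ℝ) : ℂ)) := by
  simp only [Gc, map_mul, map_div₀, Complex.conj_ofReal, conj_exp_part]
  linear_combination ((((Real.sin (ω*s) : ℝ) : ℂ) / ((ω:ℝ) : ℂ))
    * (((Real.sin (ω*s) : ℝ) : ℂ) / ((ω:ℝ) : ℂ))) * ee_one lam s


/-- In the setting of geodesics `γ_ε` of curvature `λ` leaving orthogonally from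
a C² horizontal arc-length curve `Γ` (`γ_ε(0)=Γ(ε)`, `γ_ε'(0)=i·Γ'(ε)`), at the
cut value `s_ε ∈ (0, π/√(1+λ²))` — where the vertical component of the Jacobi
field `X_ε = ∂γ/∂ε` vanishes — one has `X_ε(s_ε) = i·γ_ε'(s_ε)`, i.e. `X_ε(s_ε)`
is `J` applied to the geodesic's velocity. -/
theorem jacobi_at_cut_value (lam : ℝ)
    (Γ Γ' Γ'' : ℝ → Quaternion ℝ) (γ γs γss X : ℝ → ℝ → Quaternion ℝ)
    (sε : ℝ → ℝ)
    (hΓsph : ∀ ε, ‖Γ ε‖ = 1) (hΓunit : ∀ ε, ‖Γ' ε‖ = 1)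
    (hΓhor : ∀ ε, ⟪Γ' ε, qi * Γ ε⟫ = 0)
    (hΓd1 : ∀ ε, HasDerivAt Γ (Γ' ε) ε) (hΓd2 : ∀ ε, HasDerivAt Γ' (Γ'' ε) ε)
    (hγ0 : ∀ ε, γ ε 0 = Γ ε) (hγs0 : ∀ ε, γs ε 0 = qi * Γ' ε)
    (hd1 : ∀ ε s, HasDerivAt (γ ε) (γs ε s) s)
    (hd2 : ∀ ε s, HasDerivAt (γs ε) (γss ε s) s)
    (hgeo : ∀ ε s, γss ε s + γ ε s + (2 * lam) • (qi * γs ε s) = 0)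
    (hX : ∀ ε s, HasDerivAt (fun e => γ e s) (X ε s) ε)
    (hsε : ∀ ε, sε ε ∈ Set.Ioo 0 (π / Real.sqrt (1 + lam ^ 2)))
    (hzero : ∀ ε, ⟪X ε (sε ε), qi * γ ε (sε ε)⟫ = 0) :
    ∀ ε, X ε (sε ε) = qi * γs ε (sε ε) := by
  have hpos : (0:ℝ) < 1 + lam^2 := by positivity
  set ω := Real.sqrt (1 + lam^2) with hωdef
  have hω2 : ω^2 = 1 + lam^2 := Real.sq_sqrt (le_of_lt hpos)
  have hωpos : 0 < ω := Real.sqrt_pos.mpr hpos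
  have hω : ω ≠ 0 := ne_of_gt hωpos
  have hsol : ∀ e, ∀ s, γ e s = ι (Fc lam ω s) * Γ e + ι (Gc lam ω s) * (qi * Γ' e) ∧
      γs e s = ι (-(Gc lam ω s)) * Γ e + ι (Hc lam ω s) * (qi * Γ' e) := fun e =>
    sol_explicit lam ω hω hω2 (γ e) (γs e) (γss e) (Γ e) (Γ' e) (hγ0 e) (hγs0 e)
      (hd1 e) (hd2 e) (hgeo e)
  have hII : ∀ e, ⟪Γ e, Γ e⟫ = 1 := fun e => by
    rw [real_inner_self_eq_norm_sq, hΓsph e]; norm_num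
  have hbb : ∀ e, ⟪Γ' e, Γ' e⟫ = 1 := fun e => by
    rw [real_inner_self_eq_norm_sq, hΓunit e]; norm_num
  have hba : ∀ e, ⟪Γ' e, Γ e⟫ = 0 := by
    intro e
    have hder := (hΓd1 e).inner ℝ (hΓd1 e)
    have hconst : (fun t => ⟪Γ t, Γ t⟫) = fun _ => (1:ℝ) := funext fun t => hII t
    rw [hconst] at hder
    have h0 := (hasDerivAt_const e (1:ℝ)).unique hder
    have hcomm := real_inner_comm (Γ e) (Γ' e)
    linarith
  have hb''a : ∀ e, ⟪Γ'' e, Γ e⟫ = -1 := by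
    intro e
    have hder := (hΓd2 e).inner ℝ (hΓd1 e)
    have hconst : (fun t => ⟪Γ' t, Γ t⟫) = fun _ => (0:ℝ) := funext fun t => hba t
    rw [hconst] at hder
    have h0 := (hasDerivAt_const e (0:ℝ)).unique hder
    have := hbb e
    linarith
  have hb''b : ∀ e, ⟪Γ'' e, Γ' e⟫ = 0 := by
    intro e
    have hder := (hΓd2 e).inner ℝ (hΓd2 e)
    have hconst : (fun t => ⟪Γ' t, Γ' t⟫) = fun _ => (1:ℝ) := funext fun t => hbb t
    rw [hconst] at hder
    have h0 := (hasDerivAt_const e (1:ℝ)).unique hder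
    have hcomm := real_inner_comm (Γ' e) (Γ'' e)
    linarith
  have hb''qa : ∀ e, ⟪Γ'' e, qi * Γ e⟫ = 0 := by
    intro e
    have hg : HasDerivAt (fun t => qi * Γ t) (qi * Γ' e) e := (hΓd1 e).const_mul qi
    have hder := (hΓd2 e).inner ℝ hg
    have hconst : (fun t => ⟪Γ' t, qi * Γ t⟫) = fun _ => (0:ℝ) := funext fun t => hΓhor t
    rw [hconst] at hder
    have h0 := (hasDerivAt_const e (0:ℝ)).unique hder
    have h1 : ⟪Γ' e, qi * Γ' e⟫ = 0 := by rw [real_inner_comm]; exact inner_qi_self _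
    linarith
  intro ε
  obtain ⟨hs₀pos, hs₀lt⟩ := hsε ε
  have hSpos : 0 < Real.sin (ω * sε ε) := by
    apply Real.sin_pos_of_pos_of_lt_pi (mul_pos hωpos hs₀pos)
    have h1 : sε ε * ω < π := (lt_div_iff₀ hωpos).mp hs₀lt
    linarith [h1, mul_comm (sε ε) ω]
  set h : ℝ := ⟪Γ'' ε, qi * Γ' ε⟫ with hhdef
  have hdecomp : Γ'' ε = -(Γ ε) + h • (qi * Γ' ε) := by
    have hfd := frame_decomp (Γ ε) (Γ' ε) (hΓsph ε) (hΓunit ε) (hba ε) (hΓhor ε) (Γ'' ε)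
    rw [hb''a ε, hb''qa ε, hb''b ε] at hfd
    simpa using hfd
  have hXv : X ε (sε ε) = ι (Fc lam ω (sε ε)) * Γ' ε + ι (Gc lam ω (sε ε)) * (qi * Γ'' ε) := by
    have hfun : (fun e => γ e (sε ε))
        = fun e => ι (Fc lam ω (sε ε)) * Γ e + ι (Gc lam ω (sε ε)) * (qi * Γ' e) :=
      funext fun e => (hsol e (sε ε)).1
    have hD : HasDerivAt (fun e => ι (Fc lam ω (sε ε)) * Γ e + ι (Gc lam ω (sε ε)) * (qi * Γ' e))
        (ι (Fc lam ω (sε ε)) * Γ' ε + ι (Gc lam ω (sε ε)) * (qi * Γ'' ε)) ε :=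
      ((hΓd1 ε).const_mul _).add (((hΓd2 ε).const_mul qi).const_mul _)
    have hX' := hX ε (sε ε)
    rw [hfun] at hX'
    exact hX'.unique hD
  have hγv := (hsol ε (sε ε)).1
  have hγsv := (hsol ε (sε ε)).2
  have hXv2 : X ε (sε ε) = ι (Complex.I * -(Gc lam ω (sε ε))) * Γ ε
      + ι (Fc lam ω (sε ε) - (h:ℂ) * Gc lam ω (sε ε)) * Γ' ε := by
    have h1 : qi * (-(Γ ε) + h • (qi * Γ' ε)) = -(qi * Γ ε) - h • Γ' ε := by
      rw [mul_add, mul_neg, mul_smul_comm, qi_qi]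
      module
    have e1 : ι (Gc lam ω (sε ε)) * (qi * (-(Γ ε) + h • (qi * Γ' ε)))
        = -(ι (Gc lam ω (sε ε) * Complex.I) * Γ ε) - h • (ι (Gc lam ω (sε ε)) * Γ' ε) := by
      rw [h1, mul_sub, mul_neg, iota_mul_qi, mul_smul_comm]
    have h2 : ι (Complex.I * -(Gc lam ω (sε ε))) * Γ ε
        = -(ι (Gc lam ω (sε ε) * Complex.I) * Γ ε) := by
      rw [show Complex.I * -(Gc lam ω (sε ε)) = -(Gc lam ω (sε ε) * Complex.I) from by ring,
        map_neg, neg_mul]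
    have h3 : ι (Fc lam ω (sε ε) - (h:ℂ) * Gc lam ω (sε ε)) * Γ' ε
        = ι (Fc lam ω (sε ε)) * Γ' ε - h • (ι (Gc lam ω (sε ε)) * Γ' ε) := by
      rw [map_sub, sub_mul, iota_real_mul]
    rw [hXv, hdecomp, e1, h2, h3]
    module
  have hqiγ : qi * γ ε (sε ε) = ι (Complex.I * Fc lam ω (sε ε)) * Γ ε
      + ι (-(Gc lam ω (sε ε))) * Γ' ε := by
    rw [hγv, mul_add, qi_mul_iota, qi_mul_iota, iota_mul_qi,
      show Complex.I * Gc lam ω (sε ε) * Complex.I = -(Gc lam ω (sε ε)) from by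
        linear_combination (Gc lam ω (sε ε)) * Complex.I_mul_I]
  have hqiγs : qi * γs ε (sε ε) = ι (Complex.I * -(Gc lam ω (sε ε))) * Γ ε
      + ι (-(Hc lam ω (sε ε))) * Γ' ε := by
    rw [hγsv, mul_add, qi_mul_iota, qi_mul_iota, iota_mul_qi,
      show Complex.I * Hc lam ω (sε ε) * Complex.I = -(Hc lam ω (sε ε)) from by
        linear_combination (Hc lam ω (sε ε)) * Complex.I_mul_I]
  -- inner product frame facts
  have hf1 : ⟪Γ ε, Γ ε⟫ = 1 := hII ε
  have hf2 : ⟪Γ' ε, Γ' ε⟫ = 1 := hbb ε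
  have hf3 : ⟪qi*Γ ε, Γ ε⟫ = 0 := inner_qi_self _
  have hf4 : ⟪qi*Γ' ε, Γ' ε⟫ = 0 := inner_qi_self _
  have hf5 : ⟪Γ ε, Γ' ε⟫ = 0 := by rw [real_inner_comm]; exact hba ε
  have hf6 : ⟪Γ' ε, Γ ε⟫ = 0 := hba ε
  have hf7 : ⟪qi*Γ ε, Γ' ε⟫ = 0 := by rw [real_inner_comm]; exact hΓhor ε
  have hf8 : ⟪qi*Γ' ε, Γ ε⟫ = 0 := by rw [inner_qi_left, hΓhor ε, neg_zero]
  have hz := hzero ε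
  rw [hXv2, hqiγ] at hz
  simp only [inner_add_left, inner_add_right, inner_iota, hf1, hf2, hf3, hf4, hf5, hf6, hf7, hf8,
    mul_zero, mul_one, add_zero, zero_add] at hz
  have hz2 : ((Complex.I * -(Gc lam ω (sε ε))) * (starRingEnd ℂ) (Complex.I * Fc lam ω (sε ε))
      + (Fc lam ω (sε ε) - (h:ℂ) * Gc lam ω (sε ε)) * (starRingEnd ℂ) (-(Gc lam ω (sε ε)))).re
      = 0 := by
    rw [Complex.add_re]; exact hz
  have hprod : (Complex.I * -(Gc lam ω (sε ε))) * (starRingEnd ℂ) (Complex.I * Fc lam ω (sε ε))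
      + (Fc lam ω (sε ε) - (h:ℂ) * Gc lam ω (sε ε)) * (starRingEnd ℂ) (-(Gc lam ω (sε ε)))
      = -(Gc lam ω (sε ε) * (starRingEnd ℂ) (Fc lam ω (sε ε)))
        - Fc lam ω (sε ε) * (starRingEnd ℂ) (Gc lam ω (sε ε))
        + (h:ℂ) * (Gc lam ω (sε ε) * (starRingEnd ℂ) (Gc lam ω (sε ε))) := by
    simp only [map_mul, map_neg, map_sub, Complex.conj_I, Complex.conj_ofReal]
    linear_combination (Gc lam ω (sε ε) * (starRingEnd ℂ) (Fc lam ω (sε ε))) * Complex.I_mul_I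
  rw [hprod, GcF, FcG, GcG] at hz2
  simp only [← Complex.ofReal_div] at hz2
  simp only [Complex.add_re, Complex.sub_re, Complex.neg_re, Complex.mul_re, Complex.mul_im,
    Complex.ofReal_re, Complex.ofReal_im, Complex.I_re, Complex.I_im, Complex.sub_im,
    Complex.add_im, Complex.neg_im, mul_zero, zero_mul, sub_zero, zero_sub, mul_one,
    mul_neg, neg_neg, neg_zero, add_zero, zero_add] at hz2
  field_simp at hz2
  have hkey : h * Real.sin (ω * sε ε) = 2 * Real.cos (ω * sε ε) * ω :=
    mul_right_cancel₀ (ne_of_gt hSpos) (by linear_combination hz2)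
  have hkeyC : (h:ℂ) * ((Real.sin (ω * sε ε) : ℝ) : ℂ)
      = 2*((Real.cos (ω * sε ε) : ℝ):ℂ)*((ω:ℝ):ℂ) := by exact_mod_cast hkey
  have hωC : ((ω:ℝ):ℂ) ≠ 0 := by exact_mod_cast hω
  have hinv : ((ω:ℝ):ℂ) * (((ω:ℝ):ℂ))⁻¹ = 1 := mul_inv_cancel₀ hωC
  have hCfin : Fc lam ω (sε ε) - (h:ℂ) * Gc lam ω (sε ε) = -(Hc lam ω (sε ε)) := by
    simp only [Fc, Gc, Hc, Complex.ofReal_div]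
    linear_combination (-(Complex.exp (-((lam:ℂ)*((sε ε):ℂ))*Complex.I) * (((ω:ℝ):ℂ))⁻¹)) * hkeyC
      + (-(2*((Real.cos (ω * sε ε) : ℝ):ℂ)*Complex.exp (-((lam:ℂ)*((sε ε):ℂ))*Complex.I))) * hinv
  rw [hXv2, hqiγs, hCfin]
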